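/- For d = 2, the set of sequences (a₁, a₂) ∈ ℝ² such that p + a₁·s·p' + a₂·s²·p'' is hyperbolic for every hyperbolic monic quadratic p and every real s equals the set {(a₁, a₂) : a₁² - 2a₂ ≥ 0}. -/

import Mathlib

open Polynomial

/-- A real polynomial is hyperbolic if all its complex roots are real. -/
def Hyperbolic (p : Polynomial ℝ) : Prop :=
  ∀ z : ℂ, Polynomial.aeval z p = 0 → z.im = 0


lemma aeval_quad (b c : ℝ) (z : ℂ) :
    Polynomial.aeval z (X ^ 2 + C b * X + C c) = z ^ 2 + (b : ℂ) * z + (c : ℂ) := by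
  simp [Complex.coe_algebraMap]

lemma hyp_of_disc (b c : ℝ) (h : 0 ≤ b ^ 2 - 4 * c) :
    Hyperbolic (X ^ 2 + C b * X + C c) := by
  intro z hz
  rw [aeval_quad] at hz
  have hw : (2 * z + (b : ℂ)) ^ 2 = ((b ^ 2 - 4 * c : ℝ) : ℂ) := by
    push_cast
    linear_combination 4 * hz
  set w : ℂ := 2 * z + (b : ℂ) with hwdef
  have h1 : (w ^ 2).im = 0 := by rw [hw]; exact Complex.ofReal_im _
  have h2 : 0 ≤ (w ^ 2).re := by rw [hw, Complex.ofReal_re]; exact h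
  rw [pow_two] at h1 h2
  rw [Complex.mul_im] at h1
  rw [Complex.mul_re] at h2
  have him : w.im = 0 := by
    rcases mul_eq_zero.mp (by linarith : w.re * w.im = 0) with hre | him
    · have hle : w.im * w.im ≤ 0 := by nlinarith
      have := mul_self_nonneg w.im
      exact mul_self_eq_zero.mp (le_antisymm hle this)
    · exact him
  have : w.im = 2 * z.im := by
    rw [hwdef]; simp [Complex.add_im, Complex.mul_im]
  linarith [this ▸ him]

lemma disc_of_hyp (b c : ℝ) (h : Hyperbolic (X ^ 2 + C b * X + C c)) :
    0 ≤ b ^ 2 - 4 * c := by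
  by_contra hlt
  push_neg at hlt
  set D : ℝ := 4 * c - b ^ 2 with hD
  have hDpos : 0 < D := by simp [hD]; linarith
  set z : ℂ := (-(b : ℂ)) / 2 + ((Real.sqrt D : ℝ) : ℂ) / 2 * Complex.I with hzdef
  have hsq : ((Real.sqrt D : ℝ) : ℂ) ^ 2 = (D : ℂ) := by
    have := Real.sq_sqrt hDpos.le
    exact_mod_cast this
  have hroot : Polynomial.aeval z (X ^ 2 + C b * X + C c) = 0 := by
    rw [aeval_quad, hzdef]
    have hI : Complex.I ^ 2 = -1 := Complex.I_sq
    have hDc : (D : ℂ) = 4 * (c : ℂ) - (b : ℂ) ^ 2 := by push_cast [hD]; ring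
    have hmul : (((Real.sqrt D : ℝ) : ℂ) * Complex.I) ^ 2 = -(D : ℂ) := by
      rw [mul_pow, hsq, hI]; ring
    linear_combination (1/4 : ℂ) * hmul - (1/4 : ℂ) * hDc
  have him := h z hroot
  rw [hzdef] at him
  simp [Complex.add_im, Complex.div_im, Complex.mul_im] at him
  have : Real.sqrt D ≠ 0 := ne_of_gt (Real.sqrt_pos.mpr hDpos)
  tauto

lemma quad_form (p : Polynomial ℝ) (hm : p.Monic) (hd : p.natDegree = 2) :
    p = X ^ 2 + C (p.coeff 1) * X + C (p.coeff 0) := by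
  ext n
  have h2 : p.coeff 2 = 1 := by
    have := hm.coeff_natDegree
    rwa [hd] at this
  match n with
  | 0 => simp [coeff_X_pow]
  | 1 => simp [coeff_X_pow]
  | 2 => simp [coeff_X_pow, h2]
  | (n + 3) =>
    have : p.natDegree < n + 3 := by omega
    simp [Polynomial.coeff_eq_zero_of_natDegree_lt this, coeff_X_pow]

lemma pert_form (b c a₁ a₂ s : ℝ) :
    (X ^ 2 + C b * X + C c) + (a₁ * s) • derivative (X ^ 2 + C b * X + C c)
      + (a₂ * s ^ 2) • derivative (derivative (X ^ 2 + C b * X + C c))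
    = X ^ 2 + C (b + 2 * (a₁ * s)) * X + C (c + (a₁ * s) * b + 2 * (a₂ * s ^ 2)) := by
  have h1 : derivative (X ^ 2 + C b * X + C c : Polynomial ℝ) = C 2 * X + C b := by
    simp [derivative_X_pow]
    try ring
    exact (map_ofNat C 2).symm
  have h2 : derivative (C 2 * X + C b : Polynomial ℝ) = C 2 := by simp
  rw [h1, h2]
  simp only [smul_eq_C_mul, map_add, map_mul, map_ofNat]
  ring

/-- For `d = 2`, the set of `(a₁, a₂) ∈ ℝ²` such that
`p + a₁ s p' + a₂ s² p''` is hyperbolic for every hyperbolic monic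
quadratic `p` and every real `s` equals `{(a₁, a₂) : a₁² - 2 a₂ ≥ 0}`. -/
theorem nuij_seq_dim_two :
    {a : ℝ × ℝ | ∀ p : Polynomial ℝ, p.Monic → p.natDegree = 2 → Hyperbolic p →
      ∀ s : ℝ, Hyperbolic (p + (a.1 * s) • Polynomial.derivative p
        + (a.2 * s ^ 2) • Polynomial.derivative (Polynomial.derivative p))}
    = {a : ℝ × ℝ | a.1 ^ 2 - 2 * a.2 ≥ 0} := by
  ext a
  simp only [Set.mem_setOf_eq]
  constructor
  · intro h
    have hX : Hyperbolic (X ^ 2 : Polynomial ℝ) := by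
      intro z hz
      have hz0 : z = 0 := by simpa using hz
      simp [hz0]
    have h1 := h (X ^ 2) (monic_X_pow 2) (natDegree_X_pow 2) hX 1
    have e : (X ^ 2 : Polynomial ℝ) + (a.1 * 1) • derivative (X ^ 2)
        + (a.2 * 1 ^ 2) • derivative (derivative (X ^ 2))
        = X ^ 2 + C (2 * a.1) * X + C (2 * a.2) := by
      have e0 : (X ^ 2 : Polynomial ℝ) = X ^ 2 + C 0 * X + C 0 := by simp
      rw [e0, pert_form]
      norm_num
    rw [e] at h1
    have := disc_of_hyp _ _ h1
    nlinarith
  · intro h p hm hd hp s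
    set b := p.coeff 1 with hb
    set c := p.coeff 0 with hc
    have hpform := quad_form p hm hd
    have hdisc : 0 ≤ b ^ 2 - 4 * c := by
      have hdeg : 0 < (p.map (algebraMap ℝ ℂ)).degree := by
        rw [Polynomial.degree_map_eq_of_injective (algebraMap ℝ ℂ).injective,
          Polynomial.degree_eq_natDegree hm.ne_zero, hd]
        decide
      obtain ⟨z, hz⟩ := Complex.exists_root hdeg
      have hz0 : Polynomial.aeval z p = 0 := by
        rw [aeval_def, ← eval_map]; exact hz
      have hzim := hp z hz0
      have hzx : z = ((z.re : ℝ) : ℂ) := Complex.ext (by simp) (by simp [hzim])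
      rw [hpform, aeval_quad, hzx] at hz0
      have h0 : (z.re ^ 2 + b * z.re + c : ℝ) = 0 := by exact_mod_cast hz0
      nlinarith [sq_nonneg (2 * z.re + b)]
    rw [hpform, pert_form]
    apply hyp_of_disc
    nlinarith [mul_nonneg (sq_nonneg s) h, hdisc]
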